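/- Intersection-loop removal (Appendix Lemma): Let G be an acyclic mixed graph and E = {(x₁,y),…,(x_k,y)}. There exists a GIS-witness for E with all paths half-treks if and only if there exists such a witness whose set of paths {p₁,…,p_k} contains no intersection loop, where an intersection loop is a sequence of distinct half-treks p_{i₁},…,p_{i_m} from the witness such that for each l (indices taken cyclically mod m), Right(p_{i_l}) intersects Left(p_{i_{l+1}}). -/

import Mathlib

open scoped Classical Matrix

namespace SEMPaper

/-- The kind of a step along a path in a mixed graph, relative to the direction of travel:
a forward directed edge, a backward directed edge, or a bidirected edge. -/
inductive EKind : Type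
  | fwd | bwd | bi
deriving DecidableEq

/-- An acyclic mixed graph: directed edges `dir`, bidirected edges `bi` (symmetric), with
acyclic directed part. -/
structure MixedGraph (V : Type) where
  dir : V → V → Prop
  bi : V → V → Prop
  bi_symm : ∀ {i j}, bi i j → bi j i
  acyclic : Irreflexive (Relation.TransGen dir)

namespace MixedGraph

variable {V : Type} (G : MixedGraph V)

/-- `v` is a descendant of `u`: reachable from `u` by a directed path (including `u` itself). -/
def desc (u v : V) : Prop := Relation.ReflTransGen G.dir u v

/-- `G_{E−}`: the graph `G` with the directed edges in `E` deleted. -/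
def deleteDir (E : Set (V × V)) : MixedGraph V where
  dir i j := G.dir i j ∧ (i, j) ∉ E
  bi := G.bi
  bi_symm h := G.bi_symm h
  acyclic v h := G.acyclic v (by
    have key : ∀ a b, Relation.TransGen (fun i j => G.dir i j ∧ (i, j) ∉ E) a b →
        Relation.TransGen G.dir a b := by
      intro a b h
      induction h with
      | single hab => exact Relation.TransGen.single hab.1
      | tail _ hab ih => exact Relation.TransGen.tail ih hab.1
    exact key v v h)

/-- Validity of a single step from `a` to `b` of kind `k`. -/
def stepOK (a b : V) : EKind → Prop
  | .fwd => G.dir a b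
  | .bwd => G.dir b a
  | .bi => G.bi a b

end MixedGraph

/-- Walks in a mixed graph: sequences of consecutive steps along directed edges (in either
direction) or bidirected edges. -/
inductive Walk {V : Type} (G : MixedGraph V) : V → V → Type
  | nil (v : V) : Walk G v v
  | cons {a b c : V} (k : EKind) (h : G.stepOK a b k) (w : Walk G b c) : Walk G a c

namespace Walk

variable {V : Type} {G : MixedGraph V}

/-- The list of vertices visited by a walk. -/
def support : ∀ {x y : V}, Walk G x y → List V
  | _, _, .nil v => [v]
  | x, _, .cons _ _ w => x :: w.support

/-- The list of steps of a walk: (source, target, kind). -/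
def darts : ∀ {x y : V}, Walk G x y → List (V × V × EKind)
  | _, _, .nil _ => []
  | _, _, @Walk.cons _ _ x b _ k _ w => (x, b, k) :: w.darts

/-- A path is a walk visiting distinct vertices. -/
def IsPath {x y : V} (w : Walk G x y) : Prop := w.support.Nodup

/-- A vertex with incoming step of kind `kin` and outgoing step of kind `kout` is a collider
iff both adjacent edges point into it. -/
def isColl : EKind → EKind → Bool
  | .fwd, .bwd => true
  | .fwd, .bi => true
  | .bi, .bwd => true
  | .bi, .bi => true
  | _, _ => false

/-- Auxiliary predicate: the walk, whose first vertex was entered via a step of kind `kin`,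
is unblocked given `W` (each internal vertex: colliders are in `W` or have a descendant
in `W`; non-colliders are outside `W`). -/
def UnblockedFrom (W : Set V) : ∀ {x y : V}, EKind → Walk G x y → Prop
  | _, _, _, .nil _ => True
  | x, _, kin, .cons k _ w =>
      (if isColl kin k then ∃ d ∈ W, G.desc x d else x ∉ W) ∧ UnblockedFrom W k w

/-- The walk is unblocked given `W`. -/
def Unblocked (W : Set V) : ∀ {x y : V}, Walk G x y → Prop
  | _, _, .nil _ => True
  | _, _, .cons k _ w => UnblockedFrom W k w

/-- `Left(π)`: the start vertex of `π` together with every vertex with a directed edge of `π`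
leaving it in the direction of the start. -/
def Left {x y : V} (w : Walk G x y) : Set V :=
  insert x {v | ∃ a, (a, v, EKind.bwd) ∈ w.darts}

/-- `Right(π)`: the end vertex of `π` together with every vertex with a directed edge of `π`
leaving it in the direction of the end. -/
def Right {x y : V} (w : Walk G x y) : Set V :=
  insert y {v | ∃ b, (v, b, EKind.fwd) ∈ w.darts}

/-- The walk traverses the directed edge `a → b` (in either direction of travel). -/
def UsesDirEdge {x y : V} (w : Walk G x y) (a b : V) : Prop :=
  (a, b, EKind.fwd) ∈ w.darts ∨ (b, a, EKind.bwd) ∈ w.darts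

/-- The directed edges traversed by the walk. -/
def dirEdges {x y : V} (w : Walk G x y) : Set (V × V) :=
  {e | (e.1, e.2, EKind.fwd) ∈ w.darts ∨ (e.2, e.1, EKind.bwd) ∈ w.darts}

/-- The bidirected edges traversed by the walk (up to orientation). -/
def biEdges {x y : V} (w : Walk G x y) : Set (V × V) :=
  {e | (e.1, e.2, EKind.bi) ∈ w.darts ∨ (e.2, e.1, EKind.bi) ∈ w.darts}

/-- A half-trek from the start vertex: a directed path, optionally preceded by a single
initial bidirected edge. -/
def IsHalfTrek : ∀ {x y : V}, Walk G x y → Prop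
  | _, _, .nil _ => True
  | _, _, .cons k _ w => k ≠ EKind.bwd ∧ ∀ d ∈ w.darts, d.2.2 = EKind.fwd

/-- The subpath of `w` from `v` to the end points into `v` (the edge of `w` adjacent to `v` on
the end-side has its arrowhead at `v`). -/
def pointsBackAt {x y : V} (w : Walk G x y) (v : V) : Prop :=
  ∃ b k, (v, b, k) ∈ w.darts ∧ k ≠ EKind.fwd

/-- The subpath of `w` from the start to `v` points into `v` (the edge of `w` adjacent to `v`
on the start-side has its arrowhead at `v`). -/
def pointsForwardAt {x y : V} (w : Walk G x y) (v : V) : Prop :=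
  ∃ a k, (a, v, k) ∈ w.darts ∧ k ≠ EKind.bwd

end Walk

/-- d-separation: `x` and `y` are d-separated given `W` in `G` if no path between them is
unblocked given `W`. -/
def MixedGraph.dsep {V : Type} (G : MixedGraph V) (x y : V) (W : Set V) : Prop :=
  ∀ w : Walk G x y, w.IsPath → ¬ w.Unblocked W


/-- A GIS-witness for `E = {(x i, y)}`: for each `i`, `W_i` contains no descendants of `y`
and `z_i ⫫ y` given `W_i` in `G_{E−}`; `p_i` is a path between `z_i` and `x_i` unblocked
given `W_i`; and the paths have no sided intersection. -/
def GISWitness {V : Type} (G : MixedGraph V) {k : ℕ} (x : Fin k → V) (y : V)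
    (z : Fin k → V) (Wc : Fin k → Set V) (p : ∀ i, Walk G (z i) (x i)) : Prop :=
  (∀ i, (∀ w ∈ Wc i, ¬ G.desc y w) ∧
    (G.deleteDir {e | ∃ j, e = (x j, y)}).dsep (z i) y (Wc i)) ∧
  (∀ i, (p i).IsPath ∧ (p i).Unblocked (Wc i)) ∧
  (∀ i j, i ≠ j → (p i).Left ∩ (p j).Left = ∅ ∧ (p i).Right ∩ (p j).Right = ∅)


/-! ### Auxiliary infrastructure for the proof -/

namespace Walk

variable {V : Type} {G : MixedGraph V} {W : Set V}

/-- Append two walks. -/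
def wapp : ∀ {a b c : V}, Walk G a b → Walk G b c → Walk G a c
  | _, _, _, .nil _, w => w
  | _, _, _, .cons k h u, w => .cons k h (wapp u w)

/-- Kind of the last step of a walk, with a default value for the empty walk. -/
def lastK : ∀ {a b : V}, Walk G a b → EKind → EKind
  | _, _, .nil _, d => d
  | _, _, .cons k _ u, _ => lastK u k

/-- Number of steps of a walk. -/
def wlen : ∀ {a b : V}, Walk G a b → ℕ
  | _, _, .nil _ => 0
  | _, _, .cons _ _ u => wlen u + 1

@[simp] lemma wapp_nil_left {a c : V} (w : Walk G a c) : wapp (Walk.nil a) w = w := rfl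

@[simp] lemma wapp_cons {a b c d : V} (k : EKind) (h : G.stepOK a b k) (u : Walk G b c)
    (w : Walk G c d) : wapp (Walk.cons k h u) w = Walk.cons k h (wapp u w) := rfl

@[simp] lemma support_nil {a : V} : (Walk.nil (G := G) a).support = [a] := rfl

@[simp] lemma support_cons {a b c : V} (k : EKind) (h : G.stepOK a b k) (w : Walk G b c) :
    (Walk.cons k h w).support = a :: w.support := rfl

@[simp] lemma darts_nil {a : V} : (Walk.nil (G := G) a).darts = [] := rfl

@[simp] lemma darts_cons {a b c : V} (k : EKind) (h : G.stepOK a b k) (w : Walk G b c) :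
    (Walk.cons k h w).darts = (a, b, k) :: w.darts := rfl

@[simp] lemma unbFrom_nil {a : V} {kin : EKind} :
    UnblockedFrom W kin (Walk.nil (G := G) a) := trivial

lemma unbFrom_cons_iff {a b c : V} {kin k : EKind} {h : G.stepOK a b k} {w : Walk G b c} :
    UnblockedFrom W kin (Walk.cons k h w) ↔
      (if isColl kin k then ∃ d ∈ W, G.desc a d else a ∉ W) ∧ UnblockedFrom W k w :=
  Iff.rfl

@[simp] lemma unb_nil {a : V} : Unblocked W (Walk.nil (G := G) a) := trivial

lemma unb_cons_iff {a b c : V} {k : EKind} {h : G.stepOK a b k} {w : Walk G b c} :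
    Unblocked W (Walk.cons k h w) ↔ UnblockedFrom W k w := Iff.rfl

lemma support_ne_nil : ∀ {a b : V} (w : Walk G a b), w.support ≠ []
  | _, _, .nil _ => by simp
  | _, _, .cons _ _ _ => by simp

lemma start_mem_support : ∀ {a b : V} (w : Walk G a b), a ∈ w.support
  | _, _, .nil _ => by simp
  | _, _, .cons _ _ _ => by simp

lemma end_mem_support : ∀ {a b : V} (w : Walk G a b), b ∈ w.support
  | _, _, .nil _ => by simp
  | _, _, .cons _ _ w => by simp [end_mem_support w]

lemma support_eq_dropLast_append : ∀ {a b : V} (w : Walk G a b),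
    w.support = w.support.dropLast ++ [b]
  | _, _, .nil _ => rfl
  | _, _, .cons k h w => by
      have ih := support_eq_dropLast_append w
      simp only [support_cons]
      rw [List.dropLast_cons_of_ne_nil (support_ne_nil w), List.cons_append]
      exact congrArg _ ih

lemma support_wapp : ∀ {a b c : V} (u : Walk G a b) (w : Walk G b c),
    (wapp u w).support = u.support.dropLast ++ w.support
  | _, _, _, .nil _, w => by simp
  | _, _, _, .cons k h u, w => by
      simp only [wapp_cons, support_cons]
      rw [support_wapp u w, List.dropLast_cons_of_ne_nil (support_ne_nil u)]
      rfl

lemma mem_support_wapp {a b c v : V} (u : Walk G a b) (w : Walk G b c) :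
    v ∈ (wapp u w).support ↔ v ∈ u.support ∨ v ∈ w.support := by
  rw [support_wapp, List.mem_append]
  constructor
  · rintro (h | h)
    · exact Or.inl (List.dropLast_subset _ h)
    · exact Or.inr h
  · rintro (h | h)
    · rw [support_eq_dropLast_append u, List.mem_append] at h
      rcases h with h | h
      · exact Or.inl h
      · simp at h; subst h; exact Or.inr (start_mem_support w)
    · exact Or.inr h

lemma darts_wapp : ∀ {a b c : V} (u : Walk G a b) (w : Walk G b c),
    (wapp u w).darts = u.darts ++ w.darts
  | _, _, _, .nil _, w => rfl
  | _, _, _, .cons k h u, w => by simp [darts_wapp u w]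

lemma wlen_wapp : ∀ {a b c : V} (u : Walk G a b) (w : Walk G b c),
    wlen (wapp u w) = wlen u + wlen w
  | _, _, _, .nil _, w => by simp [wlen]
  | _, _, _, .cons k h u, w => by simp [wlen, wlen_wapp u w]; omega

lemma lastK_wapp : ∀ {a b c : V} (u : Walk G a b) (w : Walk G b c) (d : EKind),
    lastK (wapp u w) d = lastK w (lastK u d)
  | _, _, _, .nil _, w, d => rfl
  | _, _, _, .cons k h u, w, d => by simp [lastK, lastK_wapp u w]

lemma unbFrom_wapp : ∀ {a b c : V} (u : Walk G a b) (w : Walk G b c) (kin : EKind),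
    UnblockedFrom W kin u → UnblockedFrom W (lastK u kin) w →
    UnblockedFrom W kin (wapp u w)
  | _, _, _, .nil _, w, kin, _, hw => hw
  | _, _, _, .cons k h u, w, kin, hu, hw => ⟨hu.1, unbFrom_wapp u w k hu.2 hw⟩

lemma unbFrom_wapp_left : ∀ {a b c : V} (u : Walk G a b) (w : Walk G b c) (kin : EKind),
    UnblockedFrom W kin (wapp u w) → UnblockedFrom W kin u
  | _, _, _, .nil _, w, kin, _ => trivial
  | _, _, _, .cons k h u, w, kin, hu => ⟨hu.1, unbFrom_wapp_left u w k hu.2⟩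

lemma unbFrom_wapp_right : ∀ {a b c : V} (u : Walk G a b) (w : Walk G b c) (kin : EKind),
    UnblockedFrom W kin (wapp u w) → UnblockedFrom W (lastK u kin) w
  | _, _, _, .nil _, w, kin, hw => hw
  | _, _, _, .cons k h u, w, kin, hu => unbFrom_wapp_right u w k hu.2

lemma unb_of_unbFrom : ∀ {a b : V} {w : Walk G a b} {kin : EKind},
    UnblockedFrom W kin w → w.Unblocked W
  | _, _, .nil _, _, _ => trivial
  | _, _, .cons _ _ _, _, h => h.2

lemma unb_wapp_right {a b c : V} {u : Walk G a b} {w : Walk G b c}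
    (h : Unblocked W (wapp u w)) : w.Unblocked W := by
  cases u with
  | nil => exact h
  | cons k hk u =>
      have h' : UnblockedFrom W k (wapp u w) := h
      exact unb_of_unbFrom (unbFrom_wapp_right u w k h')

lemma isPath_wapp {a b c : V} {u : Walk G a b} {w : Walk G b c}
    (hu : u.IsPath) (hw : w.IsPath)
    (hdisj : ∀ v ∈ u.support, v ∈ w.support → v = b) : (wapp u w).IsPath := by
  unfold IsPath at *
  rw [support_wapp]
  apply List.Nodup.append
  · exact hu.sublist (List.dropLast_sublist _)
  · exact hw
  · intro v hv hv'
    have hvu : v ∈ u.support := List.dropLast_subset _ hv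
    have hvb : v = b := hdisj v hvu hv'
    subst hvb
    rw [support_eq_dropLast_append u] at hu
    exact (List.disjoint_of_nodup_append hu) hv (by simp)

lemma isPath_wapp_left {a b c : V} {u : Walk G a b} {w : Walk G b c}
    (h : (wapp u w).IsPath) : u.IsPath := by
  unfold IsPath at *
  rw [support_wapp] at h
  have h1 : u.support.dropLast.Nodup := h.of_append_left
  have h2 : List.Disjoint u.support.dropLast w.support := List.disjoint_of_nodup_append h
  rw [support_eq_dropLast_append u]
  refine List.Nodup.append h1 (by simp) ?_
  intro v hv hv'
  simp at hv'
  subst hv'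
  exact h2 hv (start_mem_support w)

lemma isPath_wapp_right {a b c : V} {u : Walk G a b} {w : Walk G b c}
    (h : (wapp u w).IsPath) : w.IsPath := by
  unfold IsPath at *
  rw [support_wapp] at h
  exact h.of_append_right

lemma split_at_mem : ∀ {a b : V} (w : Walk G a b) (v : V), v ∈ w.support →
    ∃ (u : Walk G a v) (r : Walk G v b), wapp u r = w
  | _, _, .nil a, v, hv => by
      simp at hv; subst hv; exact ⟨.nil _, .nil _, rfl⟩
  | _, _, @Walk.cons _ _ a b c k h w, v, hv => by
      by_cases hva : v = a
      · subst hva; exact ⟨.nil _, .cons k h w, rfl⟩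
      · have hv' : v ∈ w.support := by
          rcases (by simpa using hv : v = a ∨ v ∈ w.support) with h1 | h1
          · exact absurd h1 hva
          · exact h1
        obtain ⟨u, r, hur⟩ := split_at_mem w v hv'
        exact ⟨.cons k h u, r, by rw [wapp_cons, hur]⟩

end Walk

namespace Walk

variable {V : Type} {G : MixedGraph V} {W : Set V}

@[simp] lemma isColl_fwd_right (k : EKind) : isColl k .fwd = false := by cases k <;> rfl

@[simp] lemma isColl_bwd_left (k : EKind) : isColl .bwd k = false := by cases k <;> rfl

lemma isColl_eq_true {kin k : EKind} (h : isColl kin k = true) :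
    (kin = .fwd ∨ kin = .bi) ∧ (k = .bwd ∨ k = .bi) := by
  cases kin <;> cases k <;> simp_all [isColl]

lemma check_noncoll {kin k : EKind} (h : isColl kin k = false) {P Q : Prop} (hq : Q) :
    (if isColl kin k then P else Q) := by rw [h]; simpa using hq

lemma check_coll {kin k : EKind} (h : isColl kin k = true) {P Q : Prop} (hp : P) :
    (if isColl kin k then P else Q) := by rw [h]; simpa using hp

lemma of_check_noncoll {kin k : EKind} (h : isColl kin k = false) {P Q : Prop}
    (hpq : if isColl kin k then P else Q) : Q := by rw [h] at hpq; simpa using hpq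

lemma of_check_coll {kin k : EKind} (h : isColl kin k = true) {P Q : Prop}
    (hpq : if isColl kin k then P else Q) : P := by rw [h] at hpq; simpa using hpq

/-- Every step of the walk is a forward step. -/
def AllF : ∀ {a b : V}, Walk G a b → Prop
  | _, _, .nil _ => True
  | _, _, .cons k _ w => k = .fwd ∧ AllF w

/-- Every step of the walk is a backward step. -/
def AllB : ∀ {a b : V}, Walk G a b → Prop
  | _, _, .nil _ => True
  | _, _, .cons k _ w => k = .bwd ∧ AllB w

@[simp] lemma allF_nil {a : V} : AllF (Walk.nil (G := G) a) := trivial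

@[simp] lemma allF_cons {a b c : V} {k : EKind} {h : G.stepOK a b k} {w : Walk G b c} :
    AllF (Walk.cons k h w) ↔ k = .fwd ∧ AllF w := Iff.rfl

lemma allF_iff_darts : ∀ {a b : V} (w : Walk G a b),
    AllF w ↔ ∀ d ∈ w.darts, d.2.2 = EKind.fwd
  | _, _, .nil _ => by simp [AllF]
  | _, _, .cons k h w => by simp [AllF, allF_iff_darts w]

lemma allF_wapp {a b c : V} {u : Walk G a b} {w : Walk G b c} :
    AllF (wapp u w) ↔ AllF u ∧ AllF w := by
  induction u with
  | nil _ => simp [AllF]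
  | cons k h u ih => simp only [wapp_cons, allF_cons, ih]; tauto

lemma allB_wapp {a b c : V} {u : Walk G a b} {w : Walk G b c} :
    AllB (wapp u w) ↔ AllB u ∧ AllB w := by
  induction u with
  | nil _ => simp [AllB]
  | cons k h u ih =>
      show (k = .bwd ∧ AllB (wapp u w)) ↔ (k = .bwd ∧ AllB u) ∧ AllB w
      rw [ih]; tauto

lemma desc_start_of_allF : ∀ {a b : V} (w : Walk G a b), AllF w →
    ∀ v ∈ w.support, G.desc a v
  | _, _, .nil _, _, v, hv => by simp at hv; subst hv; exact Relation.ReflTransGen.refl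
  | _, _, @Walk.cons _ _ a b c k h w, hf, v, hv => by
      rcases hf with ⟨hk, hf⟩
      subst hk
      rcases (by simpa using hv : v = a ∨ v ∈ w.support) with h1 | h1
      · subst h1; exact Relation.ReflTransGen.refl
      · exact Relation.ReflTransGen.head h (desc_start_of_allF w hf v h1)

lemma desc_end_of_allF : ∀ {a b : V} (w : Walk G a b), AllF w →
    ∀ v ∈ w.support, G.desc v b
  | _, _, .nil _, _, v, hv => by simp at hv; subst hv; exact Relation.ReflTransGen.refl
  | _, _, @Walk.cons _ _ a b c k h w, hf, v, hv => by
      rcases hf with ⟨hk, hf⟩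
      subst hk
      rcases (by simpa using hv : v = a ∨ v ∈ w.support) with h1 | h1
      · subst h1
        exact Relation.ReflTransGen.head h (desc_end_of_allF w hf _ (start_mem_support w))
      · exact desc_end_of_allF w hf v h1

lemma desc_end_of_allB : ∀ {a b : V} (w : Walk G a b), AllB w →
    ∀ v ∈ w.support, G.desc b v
  | _, _, .nil _, _, v, hv => by simp at hv; subst hv; exact Relation.ReflTransGen.refl
  | _, _, @Walk.cons _ _ a b c k h w, hf, v, hv => by
      rcases hf with ⟨hk, hf⟩
      subst hk
      rcases (by simpa using hv : v = a ∨ v ∈ w.support) with h1 | h1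
      · subst h1
        exact Relation.ReflTransGen.tail (desc_end_of_allB w hf _ (start_mem_support w)) h
      · exact desc_end_of_allB w hf v h1

/-- An all-forward walk whose vertices avoid `W` is unblocked (from any incoming kind). -/
lemma unbFrom_allF : ∀ {a b : V} (w : Walk G a b) (kin : EKind), AllF w →
    (∀ v ∈ w.support, v ∉ W) → UnblockedFrom W kin w
  | _, _, .nil _, _, _, _ => trivial
  | _, _, .cons k h w, kin, hf, hW => by
      rcases hf with ⟨hk, hf⟩
      subst hk
      exact ⟨check_noncoll (isColl_fwd_right kin) (hW _ (start_mem_support _)),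
        unbFrom_allF w .fwd hf fun v hv => hW v (by simp [hv])⟩

/-- Variant allowing the final vertex to lie in `W`. -/
lemma unbFrom_allF' : ∀ {a b : V} (w : Walk G a b) (kin : EKind), AllF w → w.IsPath →
    (∀ v ∈ w.support, v ≠ b → v ∉ W) → UnblockedFrom W kin w
  | _, _, .nil _, _, _, _, _ => trivial
  | _, _, @Walk.cons _ _ a b c k h w, kin, hf, hp, hW => by
      rcases hf with ⟨hk, hf⟩
      subst hk
      have hnd : a ∉ w.support ∧ w.support.Nodup := by
        simpa [IsPath, List.nodup_cons] using hp
      have hac : a ≠ c := fun hac => hnd.1 (hac ▸ end_mem_support w)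
      exact ⟨check_noncoll (isColl_fwd_right kin) (hW _ (start_mem_support _) hac),
        unbFrom_allF' w .fwd hf hnd.2 fun v hv hvc => hW v (by simp [hv]) hvc⟩

/-- An all-backward walk whose vertices avoid `W` is unblocked from incoming kind `bwd`. -/
lemma unbFrom_allB : ∀ {a b : V} (w : Walk G a b), AllB w →
    (∀ v ∈ w.support, v ∉ W) → UnblockedFrom W .bwd w
  | _, _, .nil _, _, _ => trivial
  | _, _, .cons k h w, hf, hW => by
      rcases hf with ⟨hk, hf⟩
      subst hk
      exact ⟨check_noncoll (isColl_bwd_left _) (hW _ (start_mem_support _)),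
        unbFrom_allB w hf fun v hv => hW v (by simp [hv])⟩

/-- From reachability, build an all-forward simple path whose vertices are intermediate. -/
lemma exists_allF_path {u v : V} (h : G.desc u v) :
    ∃ w : Walk G u v, AllF w ∧ w.IsPath ∧ ∀ x ∈ w.support, G.desc u x ∧ G.desc x v := by
  induction h with
  | refl =>
      refine ⟨.nil u, trivial, by simp [IsPath], ?_⟩
      intro x hx; simp at hx; subst hx
      exact ⟨Relation.ReflTransGen.refl, Relation.ReflTransGen.refl⟩
  | @tail b c hub hbc ih =>
      obtain ⟨w, hf, hp, hprop⟩ := ih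
      by_cases hc : c ∈ w.support
      · obtain ⟨w1, w2, hw⟩ := split_at_mem w c hc
        subst hw
        refine ⟨w1, (allF_wapp.1 hf).1, isPath_wapp_left hp, ?_⟩
        intro x hx
        have hx' : x ∈ (wapp w1 w2).support := (mem_support_wapp _ _).2 (Or.inl hx)
        exact ⟨(hprop x hx').1, desc_end_of_allF w1 (allF_wapp.1 hf).1 x hx⟩
      · refine ⟨wapp w (.cons .fwd (show G.stepOK b c .fwd from hbc) (.nil c)), ?_, ?_, ?_⟩
        · exact allF_wapp.2 ⟨hf, ⟨rfl, trivial⟩⟩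
        · refine isPath_wapp hp ?_ ?_
          · simp [IsPath, List.nodup_cons]
            intro hcb; exact hc (hcb ▸ end_mem_support w)
          · intro x hx hx'
            simp at hx'
            rcases hx' with h1 | h1
            · exact h1
            · exact absurd (h1 ▸ hx) hc
        · intro x hx
          rcases (mem_support_wapp _ _).1 hx with h1 | h1
          · obtain ⟨hd1, hd2⟩ := hprop x h1
            exact ⟨hd1, Relation.ReflTransGen.tail hd2 hbc⟩
          · simp at h1
            rcases h1 with h1 | h1 <;> subst h1
            · exact ⟨hub, Relation.ReflTransGen.single hbc⟩
            · exact ⟨Relation.ReflTransGen.tail hub hbc, Relation.ReflTransGen.refl⟩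

/-- From reachability, an all-backward simple path from the target back to the source. -/
lemma exists_allB_path {u v : V} (h : G.desc u v) :
    ∃ w : Walk G v u, AllB w ∧ w.IsPath ∧ ∀ x ∈ w.support, G.desc u x := by
  induction h with
  | refl =>
      refine ⟨.nil u, trivial, by simp [IsPath], ?_⟩
      intro x hx; simp at hx; subst hx; exact Relation.ReflTransGen.refl
  | @tail b c hub hbc ih =>
      obtain ⟨w, hf, hp, hprop⟩ := ih
      by_cases hc : c ∈ w.support
      · obtain ⟨w1, w2, hw⟩ := split_at_mem w c hc
        subst hw
        refine ⟨w2, (allB_wapp.1 hf).2, isPath_wapp_right hp, ?_⟩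
        intro x hx
        exact hprop x ((mem_support_wapp _ _).2 (Or.inr hx))
      · refine ⟨.cons .bwd (show G.stepOK c b .bwd from hbc) w, ⟨rfl, hf⟩, ?_, ?_⟩
        · unfold IsPath at hp ⊢
          simp only [support_cons, List.nodup_cons]
          exact ⟨hc, hp⟩
        · intro x hx
          rcases (by simpa using hx : x = c ∨ x ∈ w.support) with h1 | h1
          · subst h1; exact Relation.ReflTransGen.tail hub hbc
          · exact hprop x h1

end Walk

namespace Walk

variable {V : Type} {G : MixedGraph V} {W : Set V}

/-- Transfer a walk with no backward darts into a subgraph obtained by deleting directed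
edges, provided none of the used directed edges is deleted. -/
lemma transfer_walk {E : Set (V × V)} :
    ∀ {a b : V} (w : Walk G a b),
      (∀ p ∈ w.darts, p.2.2 ≠ EKind.bwd) →
      (∀ p ∈ w.darts, p.2.2 = EKind.fwd → (p.1, p.2.1) ∉ E) →
      ∃ w' : Walk (G.deleteDir E) a b, w'.support = w.support ∧ w'.darts = w.darts
  | _, _, .nil a, _, _ => ⟨.nil a, rfl, rfl⟩
  | _, _, @Walk.cons _ _ a b c k h w, hnb, ht => by
      obtain ⟨w', hs, hd⟩ := transfer_walk w (fun p hp => hnb p (by simp [hp]))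
        (fun p hp hf => ht p (by simp [hp]) hf)
      cases k with
      | fwd =>
          exact ⟨.cons .fwd (show (G.deleteDir E).stepOK a b .fwd from ⟨h, ht (a, b, .fwd) (by simp) rfl⟩) w',
            by simp [hs], by simp [hd]⟩
      | bwd => exact absurd rfl (hnb (a, b, .bwd) (by simp))
      | bi => exact ⟨.cons .bi (show (G.deleteDir E).stepOK a b .bi from h) w', by simp [hs], by simp [hd]⟩

end Walk

namespace MixedGraph

variable {V : Type} {G : MixedGraph V}

lemma desc_antisymm {a b : V} (h1 : G.desc a b) (h2 : G.desc b a) : a = b := by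
  rcases Relation.reflTransGen_iff_eq_or_transGen.mp h1 with h | h
  · exact h.symm
  · rcases Relation.reflTransGen_iff_eq_or_transGen.mp h2 with h' | h'
    · exact h'
    · exact absurd (h.trans h') (G.acyclic a)

lemma desc_of_deleteDir {E : Set (V × V)} {a b : V} (h : (G.deleteDir E).desc a b) :
    G.desc a b :=
  by
    induction h with
    | refl => exact Relation.ReflTransGen.refl
    | tail _ hd ih => exact Relation.ReflTransGen.tail ih hd.1

/-- The descendants of `y` are also `G_{E-}`-descendants of `y` when all deleted edges
point into `y`. -/
lemma deleteDir_desc_of_desc {E : Set (V × V)} {y : V} (hEy : ∀ e ∈ E, e.2 = y)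
    {v : V} (h : G.desc y v) : (G.deleteDir E).desc y v := by
  induction h with
  | refl => exact Relation.ReflTransGen.refl
  | @tail b c hb hbc ih =>
      by_cases hcy : c = y
      · subst hcy; exact Relation.ReflTransGen.refl
      · exact Relation.ReflTransGen.tail ih ⟨hbc, fun hmem => hcy (hEy _ hmem)⟩

end MixedGraph

namespace Walk

variable {V : Type} {G : MixedGraph V} {W : Set V}

/-- Helper for the ancestrality lemma: a vertex leaving along a forward edge reaches the
walk's end or some element of `W` by a directed path. -/
lemma anc_helper {b b' c : V} (w : Walk G b' c) (h : G.dir b b')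
    (hu : UnblockedFrom W .fwd w) : G.desc b c ∨ ∃ d ∈ W, G.desc b d := by
  induction w generalizing b with
  | nil v => exact Or.inl (Relation.ReflTransGen.single h)
  | cons k'' h'' w ih =>
      rcases hu with ⟨hchk, hrest⟩
      by_cases hcol : isColl .fwd k'' = true
      · obtain ⟨d, hd, hdesc⟩ := of_check_coll hcol hchk
        exact Or.inr ⟨d, hd, Relation.ReflTransGen.head h hdesc⟩
      · have hk : k'' = .fwd := by
          cases k'' <;> simp_all [isColl]
        subst hk
        rcases ih h'' hrest with h1 | h1
        · exact Or.inl (Relation.ReflTransGen.head h h1)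
        · obtain ⟨d, hd, hdesc⟩ := h1
          exact Or.inr ⟨d, hd, Relation.ReflTransGen.head h hdesc⟩

/-- Ancestrality: every vertex of an unblocked walk has a directed path to one of the
endpoints or to an element of `W`. -/
lemma anc : ∀ {a c : V} (w : Walk G a c) (kin : EKind), UnblockedFrom W kin w →
    ∀ v ∈ w.support, G.desc v a ∨ G.desc v c ∨ ∃ d ∈ W, G.desc v d
  | _, _, .nil _, _, _, v, hv => by
      simp at hv; subst hv; exact Or.inl Relation.ReflTransGen.refl
  | _, _, @Walk.cons _ _ a b c k h w, kin, hu, v, hv => by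
      rcases hu with ⟨hchk, hrest⟩
      rcases (by simpa using hv : v = a ∨ v ∈ w.support) with h1 | h1
      · subst h1; exact Or.inl Relation.ReflTransGen.refl
      · have hb : G.desc b a ∨ G.desc b c ∨ ∃ d ∈ W, G.desc b d := by
          cases w with
          | nil => exact Or.inr (Or.inl Relation.ReflTransGen.refl)
          | cons k' h' w' =>
              rcases hrest with ⟨hchk2, hrest2⟩
              by_cases hcol : isColl k k' = true
              · obtain ⟨d, hd, hdd⟩ := of_check_coll hcol hchk2
                exact Or.inr (Or.inr ⟨d, hd, hdd⟩)
              · cases k with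
                | bwd => exact Or.inl (Relation.ReflTransGen.single h)
                | fwd =>
                    have hk' : k' = .fwd := by cases k' <;> simp_all [isColl]
                    subst hk'
                    rcases anc_helper w' h' hrest2 with h3 | h3
                    · exact Or.inr (Or.inl h3)
                    · exact Or.inr (Or.inr h3)
                | bi =>
                    have hk' : k' = .fwd := by cases k' <;> simp_all [isColl]
                    subst hk'
                    rcases anc_helper w' h' hrest2 with h3 | h3
                    · exact Or.inr (Or.inl h3)
                    · exact Or.inr (Or.inr h3)
        rcases anc w k hrest v h1 with h2 | h2 | h2
        · rcases hb with h3 | h3 | h3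
          · exact Or.inl (h2.trans h3)
          · exact Or.inr (Or.inl (h2.trans h3))
          · obtain ⟨d, hd, hdd⟩ := h3
            exact Or.inr (Or.inr ⟨d, hd, h2.trans hdd⟩)
        · exact Or.inr (Or.inl h2)
        · exact Or.inr (Or.inr h2)

/-- Splice: walk along `A` until the first vertex lying on the all-forward path `D`,
then follow `D`. -/
lemma spl2_allF : ∀ {s t yv : V} (A : Walk G s t) (D : Walk G t yv),
    A.IsPath → AllF D → D.IsPath →
    (∀ v ∈ D.support, v ∉ W) → s ∉ D.support →
    ∃ R : Walk G s yv, R.IsPath ∧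
      (A.Unblocked W → R.Unblocked W) ∧
      (∀ kin, UnblockedFrom W kin A → UnblockedFrom W kin R) ∧
      (∀ u ∈ R.support, u ∈ A.support ∨ u ∈ D.support)
  | _, _, _, .nil _, D, _, _, _, _, hs => (hs (start_mem_support D)).elim
  | _, _, _, @Walk.cons _ _ s v t k h A', D, hAp, hDf, hDp, hDW, hs => by
      have h0 : (s :: A'.support).Nodup := hAp
      have hA'p : A'.IsPath := (List.nodup_cons.mp h0).2
      have hsA' : s ∉ A'.support := (List.nodup_cons.mp h0).1
      by_cases hv : v ∈ D.support
      · obtain ⟨D1, D2, hD⟩ := split_at_mem D v hv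
        have hD2p : D2.IsPath := isPath_wapp_right (hD ▸ hDp)
        have hD2f : AllF D2 := (allF_wapp.1 (by rw [hD]; exact hDf)).2
        have hD2sub : ∀ u ∈ D2.support, u ∈ D.support := by
          intro u hu; rw [← hD]; exact (mem_support_wapp _ _).2 (Or.inr hu)
        have hunb : UnblockedFrom W k D2 :=
          unbFrom_allF D2 k hD2f fun u hu => hDW u (hD2sub u hu)
        refine ⟨.cons k h D2, ?_, fun _ => hunb, fun kin hA => ⟨hA.1, hunb⟩, ?_⟩
        · unfold IsPath
          simp only [support_cons, List.nodup_cons]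
          exact ⟨fun hc => hs (hD2sub _ hc), hD2p⟩
        · intro u hu
          rcases (by simpa using hu : u = s ∨ u ∈ D2.support) with h1 | h1
          · subst h1; exact Or.inl (start_mem_support _)
          · exact Or.inr (hD2sub u h1)
      · obtain ⟨R', hR'p, _, hR'kin, hR'mem⟩ := spl2_allF A' D hA'p hDf hDp hDW hv
        refine ⟨.cons k h R', ?_, ?_, ?_, ?_⟩
        · unfold IsPath
          simp only [support_cons, List.nodup_cons]
          refine ⟨fun hc => ?_, hR'p⟩
          rcases hR'mem s hc with h1 | h1
          · exact hsA' h1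
          · exact hs h1
        · intro hA
          exact hR'kin k (hA : UnblockedFrom W k A')
        · intro kin hA
          exact ⟨hA.1, hR'kin k hA.2⟩
        · intro u hu
          rcases (by simpa using hu : u = s ∨ u ∈ R'.support) with h1 | h1
          · subst h1; exact Or.inl (start_mem_support _)
          · rcases hR'mem u h1 with h2 | h2
            · exact Or.inl (by simp [h2])
            · exact Or.inr h2

/-- Splice: walk along `A` until the first vertex lying on the path `D`, then follow `D`.
Junction vertices of `A` must be out of `W` and have a descendant in `W`. -/
lemma spl2_gen : ∀ {s t yv : V} (A : Walk G s t) (D : Walk G t yv),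
    A.IsPath → D.IsPath → D.Unblocked W →
    (∀ v ∈ A.support, v ≠ s → v ∉ W ∧ ∃ d ∈ W, G.desc v d) →
    s ∉ D.support →
    ∃ R : Walk G s yv, R.IsPath ∧
      (A.Unblocked W → R.Unblocked W) ∧
      (∀ kin, UnblockedFrom W kin A → UnblockedFrom W kin R) ∧
      (∀ u ∈ R.support, u ∈ A.support ∨ u ∈ D.support)
  | _, _, _, .nil _, D, _, _, _, _, hs => (hs (start_mem_support D)).elim
  | _, _, _, @Walk.cons _ _ s v t k h A', D, hAp, hDp, hDu, hop, hs => by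
      have h0 : (s :: A'.support).Nodup := hAp
      have hA'p : A'.IsPath := (List.nodup_cons.mp h0).2
      have hsA' : s ∉ A'.support := (List.nodup_cons.mp h0).1
      have hvs : v ≠ s := fun hc => hsA' (hc ▸ start_mem_support A')
      have hvA : v ∈ (Walk.cons k h A').support := by simp [start_mem_support]
      by_cases hv : v ∈ D.support
      · obtain ⟨D1, D2, hD⟩ := split_at_mem D v hv
        have hD2p : D2.IsPath := isPath_wapp_right (hD ▸ hDp)
        have hD2u : D2.Unblocked W := unb_wapp_right (hD ▸ hDu)
        have hD2sub : ∀ u ∈ D2.support, u ∈ D.support := by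
          intro u hu; rw [← hD]; exact (mem_support_wapp _ _).2 (Or.inr hu)
        have hunb : UnblockedFrom W k D2 := by
          cases D2 with
          | nil => exact trivial
          | cons k2 h2 D2' =>
              refine ⟨?_, hD2u⟩
              by_cases hcol : isColl k k2 = true
              · exact check_coll hcol (hop v hvA hvs).2
              · exact check_noncoll (by simpa using hcol) (hop v hvA hvs).1
        refine ⟨.cons k h D2, ?_, fun _ => hunb, fun kin hA => ⟨hA.1, hunb⟩, ?_⟩
        · unfold IsPath
          simp only [support_cons, List.nodup_cons]
          exact ⟨fun hc => hs (hD2sub _ hc), hD2p⟩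
        · intro u hu
          rcases (by simpa using hu : u = s ∨ u ∈ D2.support) with h1 | h1
          · subst h1; exact Or.inl (start_mem_support _)
          · exact Or.inr (hD2sub u h1)
      · have hop' : ∀ u ∈ A'.support, u ≠ v → u ∉ W ∧ ∃ d ∈ W, G.desc u d := by
          intro u hu _
          refine hop u (by simp [hu]) fun hc => ?_
          subst hc; exact hsA' hu
        obtain ⟨R', hR'p, _, hR'kin, hR'mem⟩ := spl2_gen A' D hA'p hDp hDu hop' hv
        refine ⟨.cons k h R', ?_, ?_, ?_, ?_⟩
        · unfold IsPath
          simp only [support_cons, List.nodup_cons]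
          refine ⟨fun hc => ?_, hR'p⟩
          rcases hR'mem s hc with h1 | h1
          · exact hsA' h1
          · exact hs h1
        · intro hA
          exact hR'kin k (hA : UnblockedFrom W k A')
        · intro kin hA
          exact ⟨hA.1, hR'kin k hA.2⟩
        · intro u hu
          rcases (by simpa using hu : u = s ∨ u ∈ R'.support) with h1 | h1
          · subst h1; exact Or.inl (start_mem_support _)
          · rcases hR'mem u h1 with h2 | h2
            · exact Or.inl (by simp [h2])
            · exact Or.inr h2

end Walk

namespace Walk

variable {V : Type} {G : MixedGraph V} {W : Set V}

lemma unb_wapp_left {a b c : V} {u : Walk G a b} {w : Walk G b c}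
    (h : Unblocked W (wapp u w)) : u.Unblocked W := by
  cases u with
  | nil => trivial
  | cons k hk u => exact unbFrom_wapp_left u w k (h : UnblockedFrom W k (wapp u w))

lemma dart_tgt_mem : ∀ {a b : V} (w : Walk G a b) {q : V × V × EKind},
    q ∈ w.darts → q.2.1 ∈ w.support
  | _, _, .nil _, _, hq => by simp at hq
  | _, _, .cons k hk w, q, hq => by
      rcases (by simpa using hq : q = _ ∨ q ∈ w.darts) with h1 | h1
      · subst h1; simp [start_mem_support]
      · simp [dart_tgt_mem w h1]

lemma dart_src_mem : ∀ {a b : V} (w : Walk G a b) {q : V × V × EKind},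
    q ∈ w.darts → q.1 ∈ w.support
  | _, _, .nil _, _, hq => by simp at hq
  | _, _, .cons k hk w, q, hq => by
      rcases (by simpa using hq : q = _ ∨ q ∈ w.darts) with h1 | h1
      · subst h1; simp
      · simp [dart_src_mem w h1]

/-- The classification of the second vertex of an unblocked walk. -/
lemma anc_head {a b c : V} (w : Walk G b c) (k : EKind) (h : G.stepOK a b k)
    (hu : UnblockedFrom W k w) : G.desc b a ∨ G.desc b c ∨ ∃ d ∈ W, G.desc b d := by
  cases w with
  | nil => exact Or.inr (Or.inl Relation.ReflTransGen.refl)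
  | cons k' h' w' =>
      rcases hu with ⟨hchk2, hrest2⟩
      by_cases hcol : isColl k k' = true
      · obtain ⟨d, hd, hdd⟩ := of_check_coll hcol hchk2
        exact Or.inr (Or.inr ⟨d, hd, hdd⟩)
      · cases k with
        | bwd => exact Or.inl (Relation.ReflTransGen.single h)
        | fwd =>
            have hk' : k' = .fwd := by cases k' <;> simp_all [isColl]
            subst hk'
            rcases anc_helper w' h' hrest2 with h3 | h3
            · exact Or.inr (Or.inl h3)
            · exact Or.inr (Or.inr h3)
        | bi =>
            have hk' : k' = .fwd := by cases k' <;> simp_all [isColl]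
            subst hk'
            rcases anc_helper w' h' hrest2 with h3 | h3
            · exact Or.inr (Or.inl h3)
            · exact Or.inr (Or.inr h3)

lemma ht_no_bwd {a b : V} {p : Walk G a b} (h : p.IsHalfTrek) :
    ∀ q ∈ p.darts, q.2.2 ≠ EKind.bwd := by
  cases p with
  | nil => simp
  | cons k hk w =>
      rcases h with ⟨hk0, hall⟩
      intro q hq
      rcases (by simpa using hq : q = _ ∨ q ∈ w.darts) with h1 | h1
      · subst h1; simpa using hk0
      · rw [hall q h1]; simp

lemma ht_tail_allF {a b c : V} {k : EKind} {hk : G.stepOK a b k} {w : Walk G b c}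
    (h : (Walk.cons k hk w).IsHalfTrek) : AllF w :=
  (allF_iff_darts w).2 fun d hd => h.2 d hd

lemma allF_ht {a b : V} {p : Walk G a b} (h : AllF p) : p.IsHalfTrek := by
  cases p with
  | nil => trivial
  | cons k hk w =>
      rcases h with ⟨hk0, hall⟩
      subst hk0
      exact ⟨by simp, fun d hd => ((allF_iff_darts w).1 hall) d hd⟩

lemma left_ht {a b : V} {p : Walk G a b} (h : p.IsHalfTrek) : p.Left = {a} := by
  unfold Left
  have he : {v | ∃ u, (u, v, EKind.bwd) ∈ p.darts} = (∅ : Set V) := by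
    ext v
    simp only [Set.mem_setOf_eq, Set.mem_empty_iff_false, iff_false, not_exists]
    intro u hu
    exact (ht_no_bwd h _ hu) rfl
  rw [he]
  simp

lemma unbFrom_allF_inv : ∀ {a b : V} (w : Walk G a b) (kin : EKind), AllF w →
    UnblockedFrom W kin w → ∀ v ∈ w.support, v ≠ b → v ∉ W
  | _, _, .nil _, _, _, _, v, hv, hvb => by simp at hv; exact absurd hv hvb
  | _, _, @Walk.cons _ _ a b c k hk w, kin, hf, hu, v, hv, hvb => by
      rcases hf with ⟨hkf, hf⟩
      subst hkf
      rcases (by simpa using hv : v = a ∨ v ∈ w.support) with h1 | h1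
      · subst h1
        exact of_check_noncoll (isColl_fwd_right kin) hu.1
      · exact unbFrom_allF_inv w .fwd hf hu.2 v h1 hvb

/-- Internal vertices of an unblocked half-trek avoid the conditioning set. -/
lemma ht_internals_not_mem {a b : V} {p : Walk G a b} (hht : p.IsHalfTrek)
    (hu : p.Unblocked W) : ∀ v ∈ p.support, v ≠ a → v ≠ b → v ∉ W := by
  cases p with
  | nil =>
      intro v hv hva _
      simp at hv; exact absurd hv hva
  | cons k hk w =>
      intro v hv hva hvb
      rcases (by simpa using hv : v = _ ∨ v ∈ w.support) with h1 | h1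
      · exact absurd h1 hva
      · exact unbFrom_allF_inv w k (ht_tail_allF hht) hu v h1 hvb

/-- Splitting a half-trek path at a vertex of its `Right` set. -/
lemma right_mem_split {a b : V} {p : Walk G a b} (hht : p.IsHalfTrek)
    {v : V} (hv : v ∈ p.Right) (hva : v ≠ a) :
    ∃ (q : Walk G a v) (r : Walk G v b), wapp q r = p ∧ AllF r := by
  have hmem : v ∈ p.support := by
    rcases hv with hb | ⟨b', hd⟩
    · subst hb; exact end_mem_support p
    · exact dart_src_mem p hd
  obtain ⟨q, r, hqr⟩ := split_at_mem p v hmem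
  refine ⟨q, r, hqr, ?_⟩
  cases q with
  | nil => exact absurd rfl hva
  | cons k0 h0 q' =>
      rw [← hqr] at hht
      exact (allF_wapp.1 (ht_tail_allF hht)).2

/-- Vertices of a proper prefix avoid the rest of a path. -/
lemma prefix_disj {a b c : V} {u : Walk G a b} {w : Walk G b c}
    (hp : (wapp u w).IsPath) : ∀ v ∈ u.support, v ≠ b → v ∉ w.support := by
  intro v hv hvb hvw
  unfold IsPath at hp
  rw [support_wapp] at hp
  have hd := List.disjoint_of_nodup_append hp
  have hv' : v ∈ u.support.dropLast := by
    rw [support_eq_dropLast_append u, List.mem_append] at hv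
    rcases hv with h1 | h1
    · exact h1
    · simp at h1; exact absurd h1 hvb
  exact hd hv' hvw

/-- A path from a vertex to itself has singleton support. -/
lemma path_self {a b : V} (w : Walk G a b) (hw : w.IsPath) (hab : a = b) :
    ∀ v ∈ w.support, v = a := by
  cases w with
  | nil => intro v hv; simpa using hv
  | cons k hk w' =>
      subst hab
      have h0 : (a :: w'.support).Nodup := hw
      exact absurd (end_mem_support w') (List.nodup_cons.mp h0).1

/-- Unblockedness for walks whose darts are forward except possibly an initial one. -/
lemma unb_shape {a b : V} (w : Walk G a b)
    (hsh : ∀ d ∈ w.darts, d.2.2 = EKind.fwd ∨ d.1 = a)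
    (hp : w.IsPath) (hW : ∀ v ∈ w.support, v ≠ a → v ≠ b → v ∉ W) :
    w.Unblocked W := by
  cases w with
  | nil => trivial
  | cons k hk w0 =>
      have h0 : (a :: w0.support).Nodup := hp
      have haw0 : a ∉ w0.support := (List.nodup_cons.mp h0).1
      have hf : AllF w0 := by
        rw [allF_iff_darts]
        intro d hd
        rcases hsh d (by simp [hd]) with h1 | h1
        · exact h1
        · exact absurd (h1 ▸ dart_src_mem w0 hd) haw0
      exact unbFrom_allF' w0 k hf (List.nodup_cons.mp h0).2
        fun v hv hvb => hW v (by simp [hv]) (fun hva => haw0 (hva ▸ hv)) hvb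

/-- Vertices other than the start descend to the end, for such walks. -/
lemma desc_end_of_shape {a b : V} (w : Walk G a b)
    (hsh : ∀ d ∈ w.darts, d.2.2 = EKind.fwd ∨ d.1 = a)
    (hp : w.IsPath) : ∀ v ∈ w.support, v ≠ a → G.desc v b := by
  cases w with
  | nil => intro v hv hva; simp at hv; exact absurd hv hva
  | cons k hk w0 =>
      have h0 : (a :: w0.support).Nodup := hp
      have haw0 : a ∉ w0.support := (List.nodup_cons.mp h0).1
      have hf : AllF w0 := by
        rw [allF_iff_darts]
        intro d hd
        rcases hsh d (by simp [hd]) with h1 | h1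
        · exact h1
        · exact absurd (h1 ▸ dart_src_mem w0 hd) haw0
      intro v hv hva
      rcases (by simpa using hv : v = a ∨ v ∈ w0.support) with h1 | h1
      · exact absurd h1 hva
      · exact desc_end_of_allF w0 hf v h1

/-- Shape is inherited by prefixes. -/
lemma shape_of_prefix {a b c : V} {u : Walk G a b} {w : Walk G b c}
    (hsh : ∀ d ∈ (wapp u w).darts, d.2.2 = EKind.fwd ∨ d.1 = a) :
    ∀ d ∈ u.darts, d.2.2 = EKind.fwd ∨ d.1 = a := by
  intro d hd
  exact hsh d (by rw [darts_wapp]; simp [hd])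

/-- Half-treks have the required shape. -/
lemma ht_shape {a b : V} {p : Walk G a b} (hht : p.IsHalfTrek) :
    ∀ d ∈ p.darts, d.2.2 = EKind.fwd ∨ d.1 = a := by
  cases p with
  | nil => simp
  | cons k hk w =>
      intro d hd
      rcases (by simpa using hd : d = _ ∨ d ∈ w.darts) with h1 | h1
      · subst h1; simp
      · exact Or.inl (hht.2 d h1)

end Walk

section Rotation

variable {V : Type} {G : MixedGraph V} {E : Set (V × V)} {y : V}

open Walk

/-- A source d-separated from `y` given a set of non-descendants of `y` is itself not a
descendant of `y`. -/
lemma not_desc_y_source (hEy : ∀ e ∈ E, e.2 = y) {z : V} {W : Set V}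
    (hW : ∀ w ∈ W, ¬ G.desc y w) (hd : (G.deleteDir E).dsep z y W) : ¬ G.desc y z := by
  intro h
  have h' : (G.deleteDir E).desc y z := MixedGraph.deleteDir_desc_of_desc hEy h
  obtain ⟨w, hb, hp, hprop⟩ := Walk.exists_allB_path h'
  refine hd w hp ?_
  cases w with
  | nil => trivial
  | cons kk hk w' =>
      rcases hb with ⟨hkb, hb⟩
      subst hkb
      exact Walk.unbFrom_allB w' hb fun v hv hvW =>
        hW v hvW (MixedGraph.desc_of_deleteDir (hprop v (by simp [hv])))

lemma y_not_mem_support {z xi : V} {W : Set V}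
    (p : Walk G z xi) (hht : p.IsHalfTrek) (hxiy : G.dir xi y)
    (hdsep : (G.deleteDir E).dsep z y W) : y ∉ p.support := by
  intro hy
  cases p with
  | nil =>
      simp at hy
      subst hy
      exact hdsep (.nil _) (by simp [Walk.IsPath]) trivial
  | cons k hk w =>
      rcases (by simpa using hy : y = z ∨ y ∈ w.support) with h1 | h1
      · subst h1
        exact hdsep (.nil _) (by simp [Walk.IsPath]) trivial
      · have hdesc : G.desc y xi := Walk.desc_end_of_allF w (Walk.ht_tail_allF hht) y h1
        exact G.acyclic y (Relation.TransGen.tail' hdesc hxiy)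

lemma wlen_pos {a b : V} (w : Walk G a b) (h : a ≠ b) : 0 < Walk.wlen w := by
  cases w with
  | nil => exact absurd rfl h
  | cons k hk w => simp [Walk.wlen]

/-- **The rotation lemma.** If `z_j` lies on the right part of the unblocked half-trek
`p : z_i → x_i` of a witness, then there is a conditioning set `W''` making `z_j` a valid
source for the (strictly shorter) suffix of `p` from `z_j`. -/
lemma rotation (hEy : ∀ e ∈ E, e.2 = y)
    {zi zj xi : V} {Wi Wj : Set V}
    (p : Walk G zi xi) (hp : p.IsPath) (hpu : p.Unblocked Wi) (hph : p.IsHalfTrek)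
    (hxiy : G.dir xi y)
    (hWi : ∀ w ∈ Wi, ¬ G.desc y w) (hWj : ∀ w ∈ Wj, ¬ G.desc y w)
    (hdi : (G.deleteDir E).dsep zi y Wi) (hdj : (G.deleteDir E).dsep zj y Wj)
    (hzjR : zj ∈ p.Right) (hne : zj ≠ zi) :
    ∃ (W'' : Set V) (r : Walk G zj xi),
      Walk.AllF r ∧ r.IsPath ∧ (∀ d ∈ r.darts, d ∈ p.darts) ∧
      Walk.wlen r < Walk.wlen p ∧
      (∀ w ∈ W'', ¬ G.desc y w) ∧ (G.deleteDir E).dsep zj y W'' ∧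
      (∀ v ∈ r.support, v ≠ zj → v ≠ xi → v ∉ W'') := by
  classical
  obtain ⟨q, r, hqr, hrF⟩ := Walk.right_mem_split hph hzjR hne
  subst hqr
  have hrp : r.IsPath := Walk.isPath_wapp_right hp
  have hrd : ∀ d ∈ r.darts, d ∈ (wapp q r).darts := by
    intro d hd; rw [Walk.darts_wapp]; simp [hd]
  have hlen : Walk.wlen r < Walk.wlen (wapp q r) := by
    rw [Walk.wlen_wapp]
    have := wlen_pos q hne.symm
    omega
  by_cases hobs : ∃ u', u' ∈ Wj ∧ u' ∈ r.support ∧ u' ≠ zj ∧ u' ≠ xi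
  swap
  · exact ⟨Wj, r, hrF, hrp, hrd, hlen, hWj, hdj,
      fun v hv h1 h2 hvW => hobs ⟨v, hvW, hv, h1, h2⟩⟩
  obtain ⟨u', hu'Wj, hu'r, hu'zj, hu'xi⟩ := hobs
  have hzjxi : zj ≠ xi := fun hzx => hu'zj (Walk.path_self r hrp hzx u' hu'r)
  have hynp : y ∉ (wapp q r).support := y_not_mem_support _ hph hxiy hdi
  have hdT : ∀ q' ∈ (wapp q r).darts, q'.2.2 = EKind.fwd → (q'.1, q'.2.1) ∉ E := by
    intro q' hq' _ hmem
    have h2 : q'.2.1 = y := hEy _ hmem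
    exact hynp (h2 ▸ Walk.dart_tgt_mem _ hq')
  obtain ⟨p', hp'sup, hp'darts⟩ := Walk.transfer_walk (wapp q r) (Walk.ht_no_bwd hph) hdT
  have hp'path : p'.IsPath := by unfold Walk.IsPath; rw [hp'sup]; exact hp
  have hp'shape : ∀ d ∈ p'.darts, d.2.2 = EKind.fwd ∨ d.1 = zi := by
    rw [hp'darts]; exact Walk.ht_shape hph
  have hIntern : ∀ v ∈ (wapp q r).support, v ≠ zi → v ≠ xi → v ∉ Wi :=
    Walk.ht_internals_not_mem hph hpu
  have hp'unb : p'.Unblocked Wi :=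
    Walk.unb_shape p' hp'shape hp'path
      (fun v hv => hIntern v (by rw [← hp'sup]; exact hv))
  have hrnb : ∀ d ∈ r.darts, d.2.2 ≠ EKind.bwd := by
    intro d hd
    rw [(Walk.allF_iff_darts r).1 hrF d hd]; simp
  obtain ⟨r', hr'sup, hr'darts⟩ := Walk.transfer_walk r hrnb
    (fun d hd hf => hdT d (hrd d hd) hf)
  have hr'F : Walk.AllF r' := (Walk.allF_iff_darts r').2
    (by rw [hr'darts]; exact (Walk.allF_iff_darts r).1 hrF)
  have hIdesc : ∀ v ∈ r.support, (G.deleteDir E).desc zj v := by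
    intro v hv
    exact Walk.desc_start_of_allF r' hr'F v (by rw [hr'sup]; exact hv)
  have hzju' : (G.deleteDir E).desc zj u' := hIdesc u' hu'r
  have hzir : zi ∉ r.support := fun hc =>
    Walk.prefix_disj hp zi (Walk.start_mem_support q) hne.symm hc
  have hnyzj : ¬ G.desc y zj := not_desc_y_source hEy hWj hdj
  by_cases hii : ∃ d ∈ Wi, (G.deleteDir E).desc zj d
  · -- Case (ii): use `Wi`.
    obtain ⟨d0, hd0Wi, hd0⟩ := hii
    refine ⟨Wi, r, hrF, hrp, hrd, hlen, hWi, ?_, ?_⟩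
    · intro π hπp hπu
      by_cases hzi : zi ∈ π.support
      · obtain ⟨π1, π2, hπ⟩ := Walk.split_at_mem π zi hzi
        rw [← hπ] at hπp hπu
        exact hdi π2 (Walk.isPath_wapp_right hπp) (Walk.unb_wapp_right hπu)
      · have hzjp' : zj ∈ p'.support := by
          rw [hp'sup]
          exact (Walk.mem_support_wapp q r).2 (Or.inr (Walk.start_mem_support r))
        obtain ⟨A, r2, hA⟩ := Walk.split_at_mem p' zj hzjp'
        have hA2 : (wapp A r2).IsPath := by rw [hA]; exact hp'path
        have hApath : A.IsPath := Walk.isPath_wapp_left hA2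
        have hAu : A.Unblocked Wi := Walk.unb_wapp_left
          (show Walk.Unblocked Wi (wapp A r2) by rw [hA]; exact hp'unb)
        have hAshape : ∀ d ∈ A.darts, d.2.2 = EKind.fwd ∨ d.1 = zi :=
          Walk.shape_of_prefix (show ∀ d ∈ (wapp A r2).darts, _ by rw [hA]; exact hp'shape)
        have hop : ∀ v ∈ A.support, v ≠ zi →
            v ∉ Wi ∧ ∃ d ∈ Wi, (G.deleteDir E).desc v d := by
          intro v hv hvzi
          have hvp' : v ∈ p'.support := by
            rw [← hA]; exact (Walk.mem_support_wapp A r2).2 (Or.inl hv)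
          have hvqr : v ∈ (wapp q r).support := by rw [← hp'sup]; exact hvp'
          have hvxi : v ≠ xi := by
            intro hvx
            by_cases hvzj : v = zj
            · exact hzjxi (hvzj ▸ hvx)
            · exact Walk.prefix_disj hA2 v hv hvzj (hvx ▸ Walk.end_mem_support r2)
          refine ⟨hIntern v hvqr hvzi hvxi, d0, hd0Wi, ?_⟩
          exact (Walk.desc_end_of_shape A hAshape hApath v hv hvzi).trans hd0
        obtain ⟨R, hRp, hRu, _, _⟩ := Walk.spl2_gen A π hApath hπp hπu hop hzi
        exact hdi R hRp (hRu hAu)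
    · intro v hv h1 h2
      exact hIntern v ((Walk.mem_support_wapp q r).2 (Or.inr hv))
        (fun hvzi => hzir (hvzi ▸ hv)) h2
  · -- Case (iii): use the canonical restricted separator.
    push_neg at hii
    have hiii : ∀ v, (G.deleteDir E).desc zj v → v ∉ Wi := fun v hv hvW => hii v hvW hv
    set Wstar : Set V := {v | ((G.deleteDir E).desc v zj ∨ (G.deleteDir E).desc v y) ∧
      ¬ G.desc y v ∧ ¬(v ∈ r.support ∧ v ≠ zj ∧ v ≠ xi) ∧ v ≠ zj ∧ v ≠ y} with hWsdef
    have hWsmem : ∀ v, v ∈ Wstar ↔ (((G.deleteDir E).desc v zj ∨ (G.deleteDir E).desc v y) ∧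
        ¬ G.desc y v ∧ ¬(v ∈ r.support ∧ v ≠ zj ∧ v ≠ xi) ∧ v ≠ zj ∧ v ≠ y) := by
      intro v; rw [hWsdef]; exact Iff.rfl
    have habsI : ∀ v, v ∈ r.support → v ≠ zj → v ≠ xi →
        (G.deleteDir E).desc v y → False := by
      intro v hvr hvzj hvxi hvy
      obtain ⟨D, hDf, hDp, hDprop⟩ := Walk.exists_allF_path hvy
      have hDW : ∀ u ∈ D.support, u ∉ Wi := fun u hu =>
        hiii u ((hIdesc v hvr).trans (hDprop u hu).1)
      by_cases hzi : zi ∈ D.support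
      · obtain ⟨D1, D2, hD⟩ := Walk.split_at_mem D zi hzi
        refine hdi D2 (Walk.isPath_wapp_right (by rw [hD]; exact hDp)) ?_
        have hDf2 : Walk.AllF D2 := by
          have hh : Walk.AllF (wapp D1 D2) := by rw [hD]; exact hDf
          exact (Walk.allF_wapp.1 hh).2
        cases D2 with
        | nil => trivial
        | cons k2 h2 D2' =>
            exact Walk.unbFrom_allF D2' k2 hDf2.2 fun u hu =>
              hDW u (by rw [← hD]; exact (Walk.mem_support_wapp D1 _).2 (Or.inr (by simp [hu])))
      · have hvp' : v ∈ p'.support := by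
          rw [hp'sup]; exact (Walk.mem_support_wapp q r).2 (Or.inr hvr)
        obtain ⟨A, r2, hA⟩ := Walk.split_at_mem p' v hvp'
        have hApath : A.IsPath := Walk.isPath_wapp_left
          (show (wapp A r2).IsPath by rw [hA]; exact hp'path)
        have hAu : A.Unblocked Wi := Walk.unb_wapp_left
          (show Walk.Unblocked Wi (wapp A r2) by rw [hA]; exact hp'unb)
        obtain ⟨R, hRp, hRu, _, _⟩ := Walk.spl2_allF A D hApath hDf hDp hDW hzi
        exact hdi R hRp (hRu hAu)
    have habsC : ∀ (b : V) (P : Walk (G.deleteDir E) zj b), P.IsPath → P.Unblocked Wj →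
        (G.deleteDir E).desc b y → (∀ v, (G.deleteDir E).desc b v → v ∉ Wj) → False := by
      intro b P hPp hPu hby hbW
      obtain ⟨D, hDf, hDp, hDprop⟩ := Walk.exists_allF_path hby
      have hDW : ∀ u ∈ D.support, u ∉ Wj := fun u hu => hbW u (hDprop u hu).1
      have hzjD : zj ∉ D.support := fun hc =>
        hbW u' ((hDprop zj hc).1.trans hzju') hu'Wj
      obtain ⟨R, hRp, hRu, _, _⟩ := Walk.spl2_allF P D hPp hDf hDp hDW hzjD
      exact hdj R hRp (hRu hPu)
    have master : ∀ (b c : V) (w : Walk (G.deleteDir E) b c), c = y →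
        ∀ (kin : EKind) (P : Walk (G.deleteDir E) zj b),
        Walk.UnblockedFrom Wstar kin w → w.IsPath → P.IsPath → P.Unblocked Wj →
        (∀ d, Walk.lastK P d = kin) → (∀ v ∈ P.support, v ∈ w.support → v = b) →
        b ≠ zj → ((G.deleteDir E).desc b zj ∨ (G.deleteDir E).desc b y) → False := by
      intro b c w
      induction w with
      | nil v =>
          rintro rfl kin P _ _ hPp hPu _ _ _ _
          exact hdj P hPp hPu
      | @cons bb b2 cc k2 hst w2 ih =>
          rintro rfl kin P hw hwp hPp hPu hlk hdisj hbz hb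
          have h0 : (bb :: w2.support).Nodup := hwp
          have hw2p : w2.IsPath := (List.nodup_cons.mp h0).2
          have hbnw2 : bb ∉ w2.support := (List.nodup_cons.mp h0).1
          rcases hw with ⟨hchk, hrest⟩
          by_cases hcol : isColl kin k2 = true
          · obtain ⟨dstar, hdstar, hbd⟩ := Walk.of_check_coll hcol hchk
            have hds := (hWsmem dstar).1 hdstar
            have hopen : ∃ d ∈ Wj, (G.deleteDir E).desc bb d := by
              rcases hds.1 with h3 | h3
              · exact ⟨u', hu'Wj, (hbd.trans h3).trans hzju'⟩
              · by_cases hop : ∃ d ∈ Wj, (G.deleteDir E).desc bb d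
                · exact hop
                · exact (habsC bb P hPp hPu (hbd.trans h3)
                    (fun v hv hvW => hop ⟨v, hvW, hv⟩)).elim
            have hbb2 : bb ≠ b2 := fun hc => hbnw2 (hc ▸ Walk.start_mem_support w2)
            have hb2c : (G.deleteDir E).desc b2 zj ∨ (G.deleteDir E).desc b2 cc := by
              rcases Walk.anc_head w2 k2 hst hrest with h4 | h4 | h4
              · rcases hb with h5 | h5
                · exact Or.inl (h4.trans h5)
                · exact Or.inr (h4.trans h5)
              · exact Or.inr h4
              · obtain ⟨d, hdW, hdd⟩ := h4
                rcases ((hWsmem d).1 hdW).1 with h5 | h5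
                · exact Or.inl (hdd.trans h5)
                · exact Or.inr (hdd.trans h5)
            have hb2zj : b2 ≠ zj := by
              intro hbe
              refine hbz (hdisj zj (Walk.start_mem_support P) ?_).symm
              rw [← hbe]
              simp [Walk.start_mem_support w2]
            cases P with
            | nil => exact hbz rfl
            | cons κ0 h0' P0 =>
                refine ih rfl k2
                  (wapp (Walk.cons κ0 h0' P0) (Walk.cons k2 hst (Walk.nil b2)))
                  hrest hw2p ?_ ?_ ?_ ?_ hb2zj hb2c
                · refine Walk.isPath_wapp hPp ?_ ?_
                  · show (bb :: [b2]).Nodup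
                    simp [hbb2]
                  · intro v hv hv2
                    rcases (by simpa using hv2 : v = bb ∨ v = b2) with h5 | h5
                    · exact h5
                    · subst h5
                      exact hdisj v hv (by simp [Walk.start_mem_support w2])
                · show Walk.UnblockedFrom Wj κ0 (wapp P0 (Walk.cons k2 hst (Walk.nil b2)))
                  refine Walk.unbFrom_wapp P0 _ κ0 hPu ?_
                  have hlk0 : Walk.lastK P0 κ0 = kin := hlk EKind.fwd
                  rw [hlk0]
                  exact ⟨Walk.check_coll hcol hopen, trivial⟩
                · intro d
                  rw [Walk.lastK_wapp]
                  rfl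
                · intro v hv hv2
                  rcases (Walk.mem_support_wapp _ _).1 hv with h5 | h5
                  · have h6 := hdisj v h5 (by simp [hv2])
                    exact absurd (h6 ▸ hv2) hbnw2
                  · rcases (by simpa using h5 : v = bb ∨ v = b2) with h6 | h6
                    · exact absurd (h6 ▸ hv2) hbnw2
                    · exact h6
          · have hbns : bb ∉ Wstar := Walk.of_check_noncoll (by simpa using hcol) hchk
            have hclass : G.desc cc bb ∨ (bb ∈ r.support ∧ bb ≠ zj ∧ bb ≠ xi) ∨
                bb = zj ∨ bb = cc := by
              by_contra hcon
              push_neg at hcon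
              refine hbns ((hWsmem bb).2 ⟨hb, hcon.1, ?_, hcon.2.2.1, hcon.2.2.2⟩)
              rintro ⟨ha, hb', hc'⟩
              exact hc' (hcon.2.1 ha hb')
            rcases hclass with h3 | h3 | h3 | h3
            · rcases hb with h4 | h4
              · exact hnyzj (h3.trans (MixedGraph.desc_of_deleteDir h4))
              · have hby : bb = cc :=
                  MixedGraph.desc_antisymm (MixedGraph.desc_of_deleteDir h4) h3
                exact hbnw2 (by rw [hby]; exact Walk.end_mem_support w2)
            · rcases hb with h4 | h4
              · exact h3.2.1 (MixedGraph.desc_antisymm h4 (hIdesc bb h3.1))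
              · exact habsI bb h3.1 h3.2.1 h3.2.2 h4
            · exact hbz h3
            · exact hbnw2 (by rw [h3]; exact Walk.end_mem_support w2)
    refine ⟨Wstar, r, hrF, hrp, hrd, hlen, fun w hw => ((hWsmem w).1 hw).2.1, ?_,
      fun v hv h1 h2 hvW => ((hWsmem v).1 hvW).2.2.1 ⟨hv, h1, h2⟩⟩
    intro π hπp hπu
    cases π with
    | nil => exact hdj (Walk.nil _) (by simp [Walk.IsPath]) trivial
    | @cons _ b0 _ k0 h0 w0 =>
        have h00 : (zj :: w0.support).Nodup := hπp
        have hzjw0 : zj ∉ w0.support := (List.nodup_cons.mp h00).1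
        have hw0p : w0.IsPath := (List.nodup_cons.mp h00).2
        have hb0 : b0 ≠ zj := fun hc => hzjw0 (hc ▸ Walk.start_mem_support w0)
        have hπu' : Walk.UnblockedFrom Wstar k0 w0 := hπu
        have hb0c : (G.deleteDir E).desc b0 zj ∨ (G.deleteDir E).desc b0 y := by
          rcases Walk.anc_head w0 k0 h0 hπu' with h1 | h1 | h1
          · exact Or.inl h1
          · exact Or.inr h1
          · obtain ⟨d, hdW, hdd⟩ := h1
            rcases ((hWsmem d).1 hdW).1 with h2 | h2
            · exact Or.inl (hdd.trans h2)
            · exact Or.inr (hdd.trans h2)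
        refine master b0 y w0 rfl k0 (Walk.cons k0 h0 (Walk.nil b0)) hπu' hw0p ?_ trivial
          (fun d => rfl) ?_ hb0 hb0c
        · show (zj :: [b0]).Nodup
          refine List.nodup_cons.mpr ⟨?_, List.nodup_singleton _⟩
          simp only [List.mem_singleton]
          exact fun hc => hb0 hc.symm
        · intro v hv hv2
          rcases (by simpa using hv : v = zj ∨ v = b0) with h5 | h5
          · exact absurd (h5 ▸ hv2) hzjw0
          · exact h5

end Rotation

section Main

open Walk

variable {V : Type} {G : MixedGraph V} {k : ℕ} {x : Fin k → V} {y : V}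

lemma right_subset {a b c : V} {p : Walk G a b} {r : Walk G c b}
    (hd : ∀ d ∈ r.darts, d ∈ p.darts) : ∀ v ∈ r.Right, v ∈ p.Right := by
  intro v hv
  unfold Walk.Right at hv ⊢
  rcases Set.mem_insert_iff.mp hv with hb | hmem
  · exact Set.mem_insert_iff.mpr (Or.inl hb)
  · obtain ⟨b', hb'⟩ := hmem
    exact Set.mem_insert_iff.mpr (Or.inr ⟨b', hd _ hb'⟩)

lemma surgery (hE : ∀ i, G.dir (x i) y)
    {z : Fin k → V} {Wc : Fin k → Set V} {p : ∀ i, Walk G (z i) (x i)}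
    (hwit : GISWitness G x y z Wc p) (hht : ∀ i, (p i).IsHalfTrek)
    {m : ℕ} {f : Fin (m + 2) → Fin k} (hinj : Function.Injective f)
    (hloop : ∀ l : Fin (m + 2), ((p (f l)).Right ∩ (p (f (l + 1))).Left).Nonempty) :
    ∃ (z' : Fin k → V) (Wc' : Fin k → Set V) (p' : ∀ i, Walk G (z' i) (x i)),
      GISWitness G x y z' Wc' p' ∧ (∀ i, (p' i).IsHalfTrek) ∧
      (∑ t, Walk.wlen (p' t)) < (∑ t, Walk.wlen (p t)) := by
  classical
  obtain ⟨hsep, hpaths, hside⟩ := hwit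
  have hEy : ∀ e ∈ {e : V × V | ∃ j, e = (x j, y)}, e.2 = y := by
    rintro e ⟨j, rfl⟩; rfl
  have hL : ∀ i, (p i).Left = {z i} := fun i => Walk.left_ht (hht i)
  have hzne : ∀ i j, i ≠ j → z i ≠ z j := by
    intro i j hij heq
    have h1 : z i ∈ (p i).Left ∩ (p j).Left := by
      rw [hL i, hL j]
      exact ⟨rfl, heq⟩
    rw [(hside i j hij).1] at h1
    exact h1
  have hzR : ∀ l : Fin (m + 2), z (f (l + 1)) ∈ (p (f l)).Right := by
    intro l
    obtain ⟨v, hv1, hv2⟩ := hloop l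
    rw [hL] at hv2
    have hveq : v = z (f (l + 1)) := hv2
    rw [← hveq]
    exact hv1
  have hfl : ∀ l : Fin (m + 2), f l ≠ f (l + 1) := by
    intro l h
    have h2 := hinj h
    have h3 : l + 1 = l + 0 := by rw [add_zero]; exact h2.symm
    have h4 : (1 : Fin (m + 2)) = 0 := add_left_cancel h3
    have h5 := congrArg Fin.val h4
    simp at h5
  have hrot : ∀ l : Fin (m + 2), ∃ (W'' : Set V) (r : Walk G (z (f (l+1))) (x (f l))),
      Walk.AllF r ∧ r.IsPath ∧ (∀ d ∈ r.darts, d ∈ (p (f l)).darts) ∧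
      Walk.wlen r < Walk.wlen (p (f l)) ∧
      (∀ w ∈ W'', ¬ G.desc y w) ∧
      (G.deleteDir {e | ∃ j, e = (x j, y)}).dsep (z (f (l+1))) y W'' ∧
      (∀ v ∈ r.support, v ≠ z (f (l+1)) → v ≠ x (f l) → v ∉ W'') := by
    intro l
    exact rotation hEy (p (f l)) (hpaths (f l)).1 (hpaths (f l)).2 (hht (f l))
      (hE (f l)) (hsep (f l)).1 (hsep (f (l+1))).1 (hsep (f l)).2 (hsep (f (l+1))).2
      (hzR l) (hzne (f (l+1)) (f l) (fun h => hfl l h.symm))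
  choose Wr rr hrF hrp hrd hrlt hrW hrdsep hrAvoid using hrot
  have hmain : ∀ t : Fin k, ∃ (zt : V) (Wt : Set V) (pt : Walk G zt (x t)),
      (∀ w ∈ Wt, ¬ G.desc y w) ∧
      (G.deleteDir {e | ∃ j, e = (x j, y)}).dsep zt y Wt ∧
      pt.IsPath ∧ pt.Unblocked Wt ∧ pt.IsHalfTrek ∧
      pt.Left = {zt} ∧ (∀ v ∈ pt.Right, v ∈ (p t).Right) ∧
      Walk.wlen pt ≤ Walk.wlen (p t) ∧
      ((∃ l : Fin (m+2), f l = t ∧ zt = z (f (l+1)) ∧ Walk.wlen pt < Walk.wlen (p t)) ∨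
        ((¬ ∃ l, f l = t) ∧ zt = z t)) := by
    intro t
    by_cases h : ∃ l, f l = t
    · obtain ⟨l, rfl⟩ := h
      refine ⟨z (f (l+1)), Wr l, rr l, hrW l, hrdsep l, hrp l, ?_,
        Walk.allF_ht (hrF l), Walk.left_ht (Walk.allF_ht (hrF l)),
        right_subset (hrd l), (hrlt l).le, Or.inl ⟨l, rfl, rfl, hrlt l⟩⟩
      exact Walk.unb_shape (rr l)
        (fun d hd => Or.inl ((Walk.allF_iff_darts _).1 (hrF l) d hd))
        (hrp l) (hrAvoid l)
    · exact ⟨z t, Wc t, p t, (hsep t).1, (hsep t).2, (hpaths t).1, (hpaths t).2, hht t,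
        hL t, fun v hv => hv, le_refl _, Or.inr ⟨h, rfl⟩⟩
  choose z' Wc' p' hW1 hW2 hP1 hP2 hP3 hP4 hP5 hP6 hTag using hmain
  have hz'ne : ∀ s t : Fin k, s ≠ t → z' s ≠ z' t := by
    intro s t hst
    rcases hTag s with ⟨ls, hfs, hzs, _⟩ | ⟨hns, hzs⟩ <;>
      rcases hTag t with ⟨lt, hft, hzt, _⟩ | ⟨hnt, hzt⟩
    · rw [hzs, hzt]
      refine hzne _ _ fun hc => hst ?_
      have h6 : ls = lt := add_right_cancel (hinj hc)
      rw [← hfs, ← hft, h6]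
    · rw [hzs, hzt]
      exact hzne _ _ (fun hc => hnt ⟨ls + 1, hc⟩)
    · rw [hzs, hzt]
      exact hzne _ _ (fun hc => hns ⟨lt + 1, hc.symm⟩)
    · rw [hzs, hzt]; exact hzne s t hst
  refine ⟨z', Wc', p', ⟨fun i => ⟨hW1 i, hW2 i⟩, fun i => ⟨hP1 i, hP2 i⟩, ?_⟩,
    fun i => hP3 i, ?_⟩
  · intro s t hst
    constructor
    · rw [hP4 s, hP4 t, Set.singleton_inter_eq_empty]
      exact hz'ne s t hst
    · rw [Set.eq_empty_iff_forall_notMem]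
      rintro v ⟨hv1, hv2⟩
      have h3 := (hside s t hst).2
      rw [Set.eq_empty_iff_forall_notMem] at h3
      exact h3 v ⟨hP5 s v hv1, hP5 t v hv2⟩
  · refine Finset.sum_lt_sum (fun i _ => hP6 i) ⟨f 0, Finset.mem_univ _, ?_⟩
    rcases hTag (f 0) with ⟨l0, hf0, _, hlt0⟩ | ⟨hn0, _⟩
    · exact hlt0
    · exact absurd ⟨0, rfl⟩ hn0

end Main

/-- **Intersection-loop removal.** There exists a GIS-witness with all paths half-treks iff
there exists one whose paths contain no intersection loop (a cyclic sequence of distinct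
half-treks in which the `Right` of each meets the `Left` of the next). -/
theorem gis_intersection_loop_removal {V : Type} (G : MixedGraph V)
    (k : ℕ) (x : Fin k → V) (y : V) (hE : ∀ i, G.dir (x i) y) :
    (∃ (z : Fin k → V) (Wc : Fin k → Set V) (p : ∀ i, Walk G (z i) (x i)),
      GISWitness G x y z Wc p ∧ ∀ i, (p i).IsHalfTrek) ↔
    (∃ (z : Fin k → V) (Wc : Fin k → Set V) (p : ∀ i, Walk G (z i) (x i)),
      GISWitness G x y z Wc p ∧ (∀ i, (p i).IsHalfTrek) ∧
      ¬ ∃ (m : ℕ) (f : Fin (m + 2) → Fin k), Function.Injective f ∧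
        ∀ l : Fin (m + 2), ((p (f l)).Right ∩ (p (f (l + 1))).Left).Nonempty) := by
  constructor
  · rintro ⟨z, Wc, p, hwit, hht⟩
    have main : ∀ (n : ℕ) (z : Fin k → V) (Wc : Fin k → Set V)
        (p : ∀ i, Walk G (z i) (x i)), (∑ t, Walk.wlen (p t)) < n →
        GISWitness G x y z Wc p → (∀ i, (p i).IsHalfTrek) →
        ∃ (z' : Fin k → V) (Wc' : Fin k → Set V) (p' : ∀ i, Walk G (z' i) (x i)),
          GISWitness G x y z' Wc' p' ∧ (∀ i, (p' i).IsHalfTrek) ∧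
          ¬ ∃ (m : ℕ) (f : Fin (m + 2) → Fin k), Function.Injective f ∧
            ∀ l : Fin (m + 2), ((p' (f l)).Right ∩ (p' (f (l + 1))).Left).Nonempty := by
      intro n
      induction n with
      | zero => intro z Wc p h _ _; exact absurd h (Nat.not_lt_zero _)
      | succ n ih =>
          intro z Wc p hlt hwit hht
          by_cases hloop : ∃ (m : ℕ) (f : Fin (m + 2) → Fin k), Function.Injective f ∧
              ∀ l : Fin (m + 2), ((p (f l)).Right ∩ (p (f (l + 1))).Left).Nonempty
          · obtain ⟨m, f, hinj, hl⟩ := hloop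
            obtain ⟨z', Wc', p', hwit', hht', hdec⟩ := surgery hE hwit hht hinj hl
            exact ih z' Wc' p' (by omega) hwit' hht'
          · exact ⟨z, Wc, p, hwit, hht, hloop⟩
    exact main ((∑ t, Walk.wlen (p t)) + 1) z Wc p (Nat.lt_succ_self _) hwit hht
  · rintro ⟨z, Wc, p, hwit, hht, _⟩
    exact ⟨z, Wc, p, hwit, hht⟩


end SEMPaper
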